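/- Let φ : Σ* → [0,1] admit a linear representation ⟨ξ, (P(c))_{c∈Σ}, η⟩ in which ‖ξ‖ = 1, each P(c) is a projector, and η ≠ 0. Suppose there are λ and δ > 0 with |φ(w) − λ| ≥ δ for all w ∈ Σ*, and set L := {w ∈ Σ* : φ(w) > λ}. Then L is a regular language; moreover, writing P(w₁⋯w_n) := P(w₁)⋯P(w_n), there exists a deterministic finite automaton ⟨Σ, Q, δ̂, q₀, F⟩ recognizing L such that for all words w, u ∈ Σ*: if δ̂(q₀, w) ≠ δ̂(q₀, u) then ‖ξP(w) − ξP(u)‖ ≥ δ/‖η‖. -/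

import Mathlib

open Matrix

/-- The Euclidean norm `‖v‖₂ = √(∑ᵢ |vᵢ|²)` of a complex row vector. -/
noncomputable def rowNorm {N : ℕ} (v : Matrix (Fin 1) (Fin N) ℂ) : ℝ :=
  Real.sqrt (∑ i, Complex.normSq (v 0 i))

lemma rowNorm_nonneg {N : ℕ} (v : Matrix (Fin 1) (Fin N) ℂ) : 0 ≤ rowNorm v :=
  Real.sqrt_nonneg _

lemma rowNorm_sq {N : ℕ} (v : Matrix (Fin 1) (Fin N) ℂ) :
    rowNorm v ^ 2 = ∑ i, Complex.normSq (v 0 i) :=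
  Real.sq_sqrt (Finset.sum_nonneg fun i _ => Complex.normSq_nonneg _)

lemma abs_sum_mul_le {N : ℕ} (a b : Fin N → ℂ) :
    ‖∑ i, a i * b i‖ ≤
      Real.sqrt (∑ i, Complex.normSq (a i)) * Real.sqrt (∑ i, Complex.normSq (b i)) := by
  have h0 : ∀ z : ℂ, Complex.normSq z = ‖z‖ ^ 2 := by
    intro z; rw [Complex.normSq_eq_norm_sq]
  calc ‖∑ i, a i * b i‖ ≤ ∑ i, ‖a i * b i‖ := norm_sum_le _ _
    _ = ∑ i, ‖a i‖ * ‖b i‖ := by simp [norm_mul]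
    _ ≤ Real.sqrt (∑ i, ‖a i‖ ^ 2) * Real.sqrt (∑ i, ‖b i‖ ^ 2) := by
        have h1 := Finset.sum_mul_sq_le_sq_mul_sq Finset.univ (fun i => ‖a i‖) (fun i => ‖b i‖)
        have h2 : 0 ≤ ∑ i, ‖a i‖ * ‖b i‖ :=
          Finset.sum_nonneg fun i _ => mul_nonneg (norm_nonneg _) (norm_nonneg _)
        calc (∑ i, ‖a i‖ * ‖b i‖) = Real.sqrt ((∑ i, ‖a i‖ * ‖b i‖) ^ 2) :=
              (Real.sqrt_sq h2).symm
          _ ≤ Real.sqrt ((∑ i, ‖a i‖ ^ 2) * ∑ i, ‖b i‖ ^ 2) := Real.sqrt_le_sqrt h1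
          _ = _ := Real.sqrt_mul (Finset.sum_nonneg fun i _ => sq_nonneg _) _
    _ = _ := by simp [h0]

lemma entry_bound {N : ℕ} (x y : Matrix (Fin 1) (Fin N) ℂ) :
    ‖(x * y.transpose) 0 0‖ ≤ rowNorm x * rowNorm y := by
  have h : (x * y.transpose) 0 0 = ∑ i, x 0 i * y 0 i := by
    simp [Matrix.mul_apply]
  rw [h, rowNorm, rowNorm]
  exact abs_sum_mul_le _ _

lemma entry_bound_conj {N : ℕ} (x y : Matrix (Fin 1) (Fin N) ℂ) :
    ‖(x * y.conjTranspose) 0 0‖ ≤ rowNorm x * rowNorm y := by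
  have h : (x * y.conjTranspose) 0 0 = ∑ i, x 0 i * (starRingEnd ℂ) (y 0 i) := by
    simp [Matrix.mul_apply, Matrix.conjTranspose_apply]
  rw [h, rowNorm, rowNorm]
  have := abs_sum_mul_le (fun i => x 0 i) (fun i => (starRingEnd ℂ) (y 0 i))
  simpa [Complex.normSq_conj] using this

lemma rowNorm_mul_proj_le {N : ℕ} (x : Matrix (Fin 1) (Fin N) ℂ)
    (Pm : Matrix (Fin N) (Fin N) ℂ) (h1 : Pmᴴ = Pm) (h2 : Pm * Pm = Pm) :
    rowNorm (x * Pm) ≤ rowNorm x := by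
  set A := x * Pm with hA
  have hAA : (A * Aᴴ) 0 0 = ((rowNorm A ^ 2 : ℝ) : ℂ) := by
    rw [rowNorm_sq]
    push_cast
    simp [Matrix.mul_apply, Matrix.conjTranspose_apply, ← Complex.mul_conj]
  have hkey : A * Aᴴ = A * xᴴ := by
    have h3 : Aᴴ = Pm * xᴴ := by rw [hA, conjTranspose_mul, h1]
    calc A * Aᴴ = x * (Pm * (Pm * xᴴ)) := by rw [h3, hA, Matrix.mul_assoc]
      _ = x * (Pm * xᴴ) := by rw [← Matrix.mul_assoc Pm Pm xᴴ, h2]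
      _ = A * xᴴ := by rw [hA, Matrix.mul_assoc]
  have hle : rowNorm A ^ 2 ≤ rowNorm A * rowNorm x := by
    have hb := entry_bound_conj A x
    rw [← hkey, hAA] at hb
    rwa [Complex.norm_real, Real.norm_of_nonneg (sq_nonneg _)] at hb
  nlinarith [rowNorm_nonneg A, rowNorm_nonneg x]

lemma rowNorm_mul_listProd_le {σ : Type} {N : ℕ} (P : σ → Matrix (Fin N) (Fin N) ℂ)
    (hproj : ∀ c, (P c)ᴴ = P c ∧ P c * P c = P c)
    (x : Matrix (Fin 1) (Fin N) ℂ) (v : List σ) :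
    rowNorm (x * (v.map P).prod) ≤ rowNorm x := by
  induction v generalizing x with
  | nil => simp
  | cons c v ih =>
    simp only [List.map_cons, List.prod_cons, ← Matrix.mul_assoc]
    exact le_trans (ih (x * P c)) (rowNorm_mul_proj_le x (P c) (hproj c).1 (hproj c).2)

lemma rowNorm_eq_norm {N : ℕ} (v : Matrix (Fin 1) (Fin N) ℂ) :
    rowNorm v = ‖((WithLp.equiv 2 (Fin N → ℂ)).symm (v 0) : EuclideanSpace ℂ (Fin N))‖ := by
  rw [EuclideanSpace.norm_eq, rowNorm]
  congr 1
  exact Finset.sum_congr rfl fun i _ => by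
    rw [Complex.normSq_eq_norm_sq]; rfl

lemma rowNorm_pos {N : ℕ} {η : Matrix (Fin 1) (Fin N) ℂ} (h : η ≠ 0) : 0 < rowNorm η := by
  rcases (rowNorm_nonneg η).lt_or_eq with hlt | heq
  · exact hlt
  · exfalso
    apply h
    have h0 : ‖((WithLp.equiv 2 (Fin N → ℂ)).symm (η 0) : EuclideanSpace ℂ (Fin N))‖ = 0 := by
      rw [← rowNorm_eq_norm, ← heq]
    have h1 := norm_eq_zero.1 h0
    ext i j
    have h2 : ((WithLp.equiv 2 (Fin N → ℂ)).symm (η 0) : EuclideanSpace ℂ (Fin N)) j = 0 := by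
      rw [h1]; rfl
    change η 0 j = 0 at h2
    simpa [Subsingleton.elim i 0] using h2

lemma finite_of_separated {E : Type*} [MetricSpace E] {s : Set E} (hs : TotallyBounded s)
    {ε : ℝ} (hε : 0 < ε) (hsep : ∀ x ∈ s, ∀ y ∈ s, x ≠ y → ε ≤ dist x y) : s.Finite := by
  obtain ⟨t, htf, hcov⟩ := Metric.totallyBounded_iff.1 hs (ε / 2) (by linarith)
  have hsub : s ⊆ ⋃ y ∈ t, s ∩ Metric.ball y (ε / 2) := by
    intro x hx
    obtain ⟨y, hy, hxy⟩ := Set.mem_iUnion₂.1 (hcov hx)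
    exact Set.mem_iUnion₂.2 ⟨y, hy, hx, hxy⟩
  refine Set.Finite.subset (Set.Finite.biUnion htf fun y _ => ?_) hsub
  apply Set.Subsingleton.finite
  rintro a ⟨ha, hab⟩ b ⟨hb, hbb⟩
  by_contra hne
  have h1 := hsep a ha b hb hne
  have h2 : dist a b < ε := by
    have ha' := Metric.mem_ball.1 hab
    have hb' := Metric.mem_ball.1 hbb
    calc dist a b ≤ dist a y + dist y b := dist_triangle a y b
      _ = dist a y + dist b y := by rw [dist_comm y b]
      _ < ε / 2 + ε / 2 := by linarith
      _ = ε := by ring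
  linarith

/-- Let `φ : Σ* → [0,1]` admit a linear representation
`⟨ξ, (P(c))_{c∈Σ}, η⟩` with `‖ξ‖ = 1`, each `P(c)` a projector (Hermitian idempotent)
and `η ≠ 0`.  If there are `λ` and `δ > 0` with `|φ(w) − λ| ≥ δ` for all `w`, then
`L := {w : φ(w) > λ}` is a regular language; moreover there is a DFA recognizing `L`
such that words `w, u` driving it to different states satisfy
`‖ξP(w) − ξP(u)‖ ≥ δ/‖η‖` (where `P(w₁⋯w_n) = P(w₁)⋯P(w_n)`). -/
theorem regular_of_projector_linear_representation
    (σ : Type) [Fintype σ] [Nonempty σ]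
    (N : ℕ) (ξ η : Matrix (Fin 1) (Fin N) ℂ) (P : σ → Matrix (Fin N) (Fin N) ℂ)
    (φ : List σ → ℝ)
    (hrange : ∀ w, 0 ≤ φ w ∧ φ w ≤ 1)
    (hξ : ∑ i, Complex.normSq (ξ 0 i) = 1)
    (hproj : ∀ c, (P c)ᴴ = P c ∧ P c * P c = P c)
    (hη : η ≠ 0)
    (hrep : ∀ w : List σ, (ξ * (w.map P).prod * η.transpose) 0 0 = (φ w : ℂ))
    (lam δ : ℝ) (hδ : 0 < δ) (hiso : ∀ w, |φ w - lam| ≥ δ)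
    (L : Set (List σ)) (hL : L = {w | φ w > lam}) :
    (∃ (Q : Type) (_ : Fintype Q) (M : DFA σ Q), ∀ w, w ∈ M.accepts ↔ w ∈ L) ∧
    (∃ (Q : Type) (_ : Fintype Q) (M : DFA σ Q),
      (∀ w, w ∈ M.accepts ↔ w ∈ L) ∧
      ∀ w u : List σ, M.eval w ≠ M.eval u →
        rowNorm (ξ * (w.map P).prod - ξ * (u.map P).prod) ≥ δ / rowNorm η) := by
  classical
  subst hL
  set f : List σ → Matrix (Fin 1) (Fin N) ℂ := fun w => ξ * (w.map P).prod with hf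
  have hrep' : ∀ w, (f w * η.transpose) 0 0 = (φ w : ℂ) := fun w => hrep w
  have hfapp : ∀ w v : List σ, f (w ++ v) = f w * (v.map P).prod := by
    intro w v
    simp [hf, List.map_append, List.prod_append, Matrix.mul_assoc]
  have hηpos : 0 < rowNorm η := rowNorm_pos hη
  -- key separation estimate
  have hkey : ∀ w u : List σ, (¬ ∀ v, (lam < φ (w ++ v) ↔ lam < φ (u ++ v))) →
      δ / rowNorm η ≤ rowNorm (f w - f u) := by
    intro w u hne
    push_neg at hne
    obtain ⟨v, hv⟩ := hne
    have habs : 2 * δ ≤ |φ (w ++ v) - φ (u ++ v)| := by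
      rcases hv with ⟨hwv, huv⟩ | ⟨hwv, huv⟩
      · have ha : δ ≤ φ (w ++ v) - lam := by
          have h1 := hiso (w ++ v)
          rwa [ge_iff_le, abs_of_pos (sub_pos.2 hwv)] at h1
        have hb : δ ≤ lam - φ (u ++ v) := by
          have h2 := hiso (u ++ v)
          rw [ge_iff_le, abs_of_nonpos (by linarith)] at h2
          linarith
        calc 2 * δ ≤ φ (w ++ v) - φ (u ++ v) := by linarith
          _ ≤ |φ (w ++ v) - φ (u ++ v)| := le_abs_self _
      · have ha : δ ≤ φ (u ++ v) - lam := by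
          have h1 := hiso (u ++ v)
          rwa [ge_iff_le, abs_of_pos (sub_pos.2 huv)] at h1
        have hb : δ ≤ lam - φ (w ++ v) := by
          have h2 := hiso (w ++ v)
          rw [ge_iff_le, abs_of_nonpos (by linarith)] at h2
          linarith
        rw [abs_sub_comm]
        calc 2 * δ ≤ φ (u ++ v) - φ (w ++ v) := by linarith
          _ ≤ |φ (u ++ v) - φ (w ++ v)| := le_abs_self _
    have h3 : ((f w - f u) * (v.map P).prod * η.transpose) 0 0
        = ((φ (w ++ v) : ℂ) - (φ (u ++ v) : ℂ)) := by
      rw [Matrix.sub_mul, Matrix.sub_mul, Matrix.sub_apply, ← hfapp w v, ← hfapp u v,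
        hrep' (w ++ v), hrep' (u ++ v)]
    have h4 : ‖((f w - f u) * (v.map P).prod * η.transpose) 0 0‖
        = |φ (w ++ v) - φ (u ++ v)| := by
      rw [h3, ← Complex.ofReal_sub, Complex.norm_real, Real.norm_eq_abs]
    have h5 := entry_bound ((f w - f u) * (v.map P).prod) η
    have h6 := rowNorm_mul_listProd_le P hproj (f w - f u) v
    have hnorm : 2 * δ ≤ rowNorm (f w - f u) * rowNorm η := by
      calc 2 * δ ≤ |φ (w ++ v) - φ (u ++ v)| := habs
        _ = ‖((f w - f u) * (v.map P).prod * η.transpose) 0 0‖ := h4.symm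
        _ ≤ rowNorm ((f w - f u) * (v.map P).prod) * rowNorm η := h5
        _ ≤ rowNorm (f w - f u) * rowNorm η :=
            mul_le_mul_of_nonneg_right h6 (le_of_lt hηpos)
    rw [div_le_iff₀ hηpos]
    linarith
  -- the Myhill–Nerode style quotient
  let s : Setoid (List σ) := ⟨fun w u => ∀ v, (lam < φ (w ++ v) ↔ lam < φ (u ++ v)),
    ⟨fun _ _ => Iff.rfl, fun h v => (h v).symm, fun h1 h2 v => (h1 v).trans (h2 v)⟩⟩
  let Q := Quotient s
  have hstep : ∀ (c : σ) (w u : List σ), s.r w u →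
      (Quotient.mk s (w ++ [c]) = Quotient.mk s (u ++ [c])) := by
    intro c w u h
    apply Quotient.sound
    intro v
    rw [List.append_assoc, List.append_assoc]
    exact h ([c] ++ v)
  let M : DFA σ Q :=
    { step := fun q c => Quotient.lift (fun w => Quotient.mk s (w ++ [c]))
        (fun w u h => hstep c w u h) q
      start := Quotient.mk s []
      accept := {q | Quotient.lift (fun w => lam < φ w)
        (fun w u h => propext (by simpa using h [])) q} }
  have heval : ∀ w : List σ, M.eval w = Quotient.mk s w := by
    have hfrom : ∀ (w u : List σ), M.evalFrom (Quotient.mk s u) w = Quotient.mk s (u ++ w) := by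
      intro w
      induction w with
      | nil => intro u; simp [DFA.evalFrom]
      | cons c w ih =>
        intro u
        have h1 : M.evalFrom (Quotient.mk s u) (c :: w)
            = M.evalFrom (M.step (Quotient.mk s u) c) w := rfl
        have h2 : M.step (Quotient.mk s u) c = Quotient.mk s (u ++ [c]) := rfl
        rw [h1, h2, ih]
        congr 1
        simp
    intro w
    have := hfrom w []
    simpa [DFA.eval] using this
  have hacc : ∀ w, w ∈ M.accepts ↔ lam < φ w := by
    intro w
    rw [DFA.mem_accepts, heval]
    exact Iff.rfl
  -- finiteness of the quotient
  have hQne : ∀ q q' : Q, q ≠ q' → ¬ s.r q.out q'.out := by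
    intro q q' hne hr
    exact hne (by rw [← q.out_eq, ← q'.out_eq]; exact Quotient.sound hr)
  let g : Q → EuclideanSpace ℂ (Fin N) := fun q => (WithLp.equiv 2 (Fin N → ℂ)).symm (f q.out 0)
  have hg_dist : ∀ q q' : Q, q ≠ q' → δ / rowNorm η ≤ dist (g q) (g q') := by
    intro q q' hne
    have h1 := hkey q.out q'.out (hQne q q' hne)
    rw [dist_eq_norm]
    have h2 : g q - g q' =
        (WithLp.equiv 2 (Fin N → ℂ)).symm ((f q.out - f q'.out) 0) := rfl
    rw [h2, ← rowNorm_eq_norm]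
    exact h1
  have hg_inj : Function.Injective g := by
    intro q q' h
    by_contra hne
    have hd := hg_dist q q' hne
    rw [h, dist_self] at hd
    have hpos : 0 < δ / rowNorm η := div_pos hδ hηpos
    linarith
  have hg_norm : ∀ w, rowNorm (f w) ≤ 1 := by
    intro w
    have h1 := rowNorm_mul_listProd_le P hproj ξ w
    have hx1 : rowNorm ξ = 1 := by rw [rowNorm, hξ, Real.sqrt_one]
    calc rowNorm (f w) ≤ rowNorm ξ := h1
      _ = 1 := hx1
  have hrange_sub : Set.range g ⊆ Metric.closedBall 0 1 := by
    rintro x ⟨q, rfl⟩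
    rw [Metric.mem_closedBall, dist_zero_right, ← rowNorm_eq_norm]
    exact hg_norm q.out
  have hfin : (Set.range g).Finite := by
    apply finite_of_separated
      (TotallyBounded.subset hrange_sub
        (isCompact_closedBall (0 : EuclideanSpace ℂ (Fin N)) 1).totallyBounded)
      (div_pos hδ hηpos)
    rintro x ⟨q, rfl⟩ y ⟨q', rfl⟩ hxy
    exact hg_dist q q' (fun h => hxy (by rw [h]))
  have hQfin : Finite Q := by
    have hsub : Finite ↥(Set.range g) := hfin.to_subtype
    exact Finite.of_injective (fun q => (⟨g q, Set.mem_range_self q⟩ : Set.range g))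
      (fun a b hab => hg_inj (congrArg Subtype.val hab))
  letI fQ : Fintype Q := Fintype.ofFinite Q
  have hmem : ∀ w, w ∈ M.accepts ↔ w ∈ {w | φ w > lam} := fun w => hacc w
  refine ⟨⟨Q, fQ, M, hmem⟩, Q, fQ, M, hmem, ?_⟩
  intro w u hne
  rw [heval w, heval u] at hne
  have hnr : ¬ s.r w u := fun h => hne (Quotient.sound h)
  exact hkey w u hnr
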